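/- For α, γ ∈ ℂ, β ∈ ℂ*, g(t) ∈ ℂ[t], the map φ_{αβγg}: U(L) → R₀⊗D sending L_n ↦ x₀^n(∂₀+nα)⊗1, d_n ↦ x₀^n⊗(β^{-1}tg(t)+β^{-1}γ+t∂_t), a_n ↦ x₀^n⊗t, b_n ↦ x₀^n⊗(g(t)+β∂_t), c_n ↦ -βx₀^n⊗1, is a surjective homomorphism of associative algebras. -/

import Mathlib

/- STATEMENT 11: for `α, γ ∈ ℂ`, `β ∈ ℂ*`, `g(t) ∈ ℂ[t]`, the map
`φ_{αβγg} : U(L) → R₀ ⊗ D` given on generators by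
`L_n ↦ x₀^n(∂₀+nα)⊗1`, `d_n ↦ x₀^n⊗(β⁻¹tg(t)+β⁻¹γ+t∂_t)`, `a_n ↦ x₀^n⊗t`,
`b_n ↦ x₀^n⊗(g(t)+β∂_t)`, `c_n ↦ -βx₀^n⊗1` is a surjective homomorphism of
associative algebras: the generator images satisfy all bracket relations of
`L = W ⋉ Ĥ₄`, and they generate `R₀ ⊗ D` as a ℂ-algebra.
Here `R₀ = ℂ[x₀^{±1}, ∂_{x₀}]` and `D = ℂ[t, ∂_t]` are given by their
presentations. -/

noncomputable section

open TensorProduct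

/-- the defining relations of `R₀ = ℂ[x₀^{±1}, ∂_{x₀}]`:
generators `0 = x₀`, `1 = x₀⁻¹`, `2 = ∂_{x₀}`. -/
inductive R0Rel : FreeAlgebra ℂ (Fin 3) → FreeAlgebra ℂ (Fin 3) → Prop
  | inv₁ : R0Rel (FreeAlgebra.ι ℂ 0 * FreeAlgebra.ι ℂ 1) 1
  | inv₂ : R0Rel (FreeAlgebra.ι ℂ 1 * FreeAlgebra.ι ℂ 0) 1
  | der : R0Rel (FreeAlgebra.ι ℂ 2 * FreeAlgebra.ι ℂ 0)
      (FreeAlgebra.ι ℂ 0 * FreeAlgebra.ι ℂ 2 + 1)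

/-- `R₀`. -/
abbrev R0 : Type := RingQuot R0Rel

/-- the defining relation of `D = ℂ[t, ∂_t]`: generators `0 = t`, `1 = ∂_t`. -/
inductive DRel : FreeAlgebra ℂ (Fin 2) → FreeAlgebra ℂ (Fin 2) → Prop
  | der : DRel (FreeAlgebra.ι ℂ 1 * FreeAlgebra.ι ℂ 0)
      (FreeAlgebra.ι ℂ 0 * FreeAlgebra.ι ℂ 1 + 1)

/-- `D`. -/
abbrev DW : Type := RingQuot DRel

noncomputable def x0 : R0 := RingQuot.mkAlgHom ℂ R0Rel (FreeAlgebra.ι ℂ 0)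
noncomputable def x0i : R0 := RingQuot.mkAlgHom ℂ R0Rel (FreeAlgebra.ι ℂ 1)
noncomputable def dx0 : R0 := RingQuot.mkAlgHom ℂ R0Rel (FreeAlgebra.ι ℂ 2)
noncomputable def tD : DW := RingQuot.mkAlgHom ℂ DRel (FreeAlgebra.ι ℂ 0)
noncomputable def dT : DW := RingQuot.mkAlgHom ℂ DRel (FreeAlgebra.ι ℂ 1)

/-- `x₀^n` for `n ∈ ℤ`. -/
noncomputable def x0z (n : ℤ) : R0 := if 0 ≤ n then x0 ^ n.toNat else x0i ^ (-n).toNat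

/-- `g(t) ∈ D`. -/
noncomputable def gD (g : Polynomial ℂ) : DW := Polynomial.aeval tD g

/-- image of `L_n`: `x₀^n (∂₀ + nα) ⊗ 1`, where `∂₀ = x₀ ∂_{x₀}`. -/
noncomputable def qL (α : ℂ) (n : ℤ) : R0 ⊗[ℂ] DW :=
  (x0z n * (x0 * dx0) + ((n : ℂ) * α) • x0z n) ⊗ₜ (1 : DW)

/-- image of `d_n`: `x₀^n ⊗ (β⁻¹ t g(t) + β⁻¹ γ + t ∂_t)`. -/
noncomputable def qD (β γ : ℂ) (g : Polynomial ℂ) (n : ℤ) : R0 ⊗[ℂ] DW :=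
  x0z n ⊗ₜ (β⁻¹ • (tD * gD g) + (β⁻¹ * γ) • (1 : DW) + tD * dT)

/-- image of `a_n`: `x₀^n ⊗ t`. -/
noncomputable def qA (n : ℤ) : R0 ⊗[ℂ] DW := x0z n ⊗ₜ tD

/-- image of `b_n`: `x₀^n ⊗ (g(t) + β ∂_t)`. -/
noncomputable def qB (β : ℂ) (g : Polynomial ℂ) (n : ℤ) : R0 ⊗[ℂ] DW :=
  x0z n ⊗ₜ (gD g + β • dT)

/-- image of `c_n`: `-β x₀^n ⊗ 1`. -/
noncomputable def qC (β : ℂ) (n : ℤ) : R0 ⊗[ℂ] DW := (-β) • (x0z n ⊗ₜ (1 : DW))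

/-- commutator. -/
noncomputable def commRD (x y : R0 ⊗[ℂ] DW) : R0 ⊗[ℂ] DW := x * y - y * x


lemma hx1 : x0 * x0i = 1 := by
  rw [x0, x0i, ← map_mul, RingQuot.mkAlgHom_rel ℂ R0Rel.inv₁, map_one]

lemma hx2 : x0i * x0 = 1 := by
  rw [x0, x0i, ← map_mul, RingQuot.mkAlgHom_rel ℂ R0Rel.inv₂, map_one]

lemma hder : dx0 * x0 = x0 * dx0 + 1 := by
  rw [x0, dx0, ← map_mul, RingQuot.mkAlgHom_rel ℂ R0Rel.der, map_add, map_mul, map_one]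

noncomputable def uR : R0ˣ := ⟨x0, x0i, hx1, hx2⟩

lemma x0z_eq (n : ℤ) : x0z n = ((uR ^ n : R0ˣ) : R0) := by
  rcases le_or_gt 0 n with h | h
  · rw [x0z, if_pos h, ← Int.toNat_of_nonneg h, zpow_natCast, Units.val_pow_eq_pow_val]
    rfl
  · rw [x0z, if_neg (not_le.mpr h)]
    have h2 : n = -((-n).toNat : ℤ) := by omega
    rw [h2, zpow_neg, zpow_natCast, ← inv_pow, Units.val_pow_eq_pow_val]
    simp only [neg_neg, Int.toNat_natCast]
    rfl

lemma x0z_mul (m n : ℤ) : x0z m * x0z n = x0z (m + n) := by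
  rw [x0z_eq, x0z_eq, x0z_eq, ← Units.val_mul, ← zpow_add]

lemma x0z_zero : x0z 0 = 1 := by simp [x0z]
lemma hdt : dT * tD = tD * dT + 1 := by
  rw [tD, dT, ← map_mul, RingQuot.mkAlgHom_rel ℂ DRel.der, map_add, map_mul, map_one]

lemma hx1' (c : R0) : x0 * (x0i * c) = c := by rw [← mul_assoc, hx1, one_mul]
lemma hx2' (c : R0) : x0i * (x0 * c) = c := by rw [← mul_assoc, hx2, one_mul]

lemma d0_x0 : (x0 * dx0) * x0 = x0 * (x0 * dx0) + x0 := by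
  rw [mul_assoc, hder, mul_add, mul_one]

lemma d0_x0i : (x0 * dx0) * x0i = x0i * (x0 * dx0) - x0i := by
  have h : x0i * ((x0 * dx0) * x0) * x0i = x0i * (x0 * (x0 * dx0) + x0) * x0i := by
    rw [d0_x0]
  simp only [mul_add, add_mul, mul_assoc, hx1, hx2, hx1', hx2', mul_one, one_mul] at h
  simp only [mul_assoc, hx2']
  exact eq_sub_of_add_eq h.symm

lemma d0_x0i' : x0 * (dx0 * x0i) = x0i * (x0 * dx0) - x0i := by
  rw [← mul_assoc]; exact d0_x0i

lemma d0_pow (k : ℕ) : (x0 * dx0) * x0 ^ k = x0 ^ k * (x0 * dx0) + (k : ℂ) • x0 ^ k := by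
  induction k with
  | zero => simp
  | succ k ih =>
    rw [pow_succ, ← mul_assoc, ih]
    simp only [add_mul, smul_mul_assoc, mul_assoc, hder, mul_add, mul_one]
    push_cast
    module

lemma d0_powi (k : ℕ) : (x0 * dx0) * x0i ^ k = x0i ^ k * (x0 * dx0) - (k : ℂ) • x0i ^ k := by
  induction k with
  | zero => simp
  | succ k ih =>
    rw [pow_succ, ← mul_assoc, ih]
    simp only [sub_mul, smul_mul_assoc, mul_assoc, d0_x0i', mul_sub]
    push_cast
    module

lemma d0_x0z (n : ℤ) : (x0 * dx0) * x0z n = x0z n * (x0 * dx0) + (n : ℂ) • x0z n := by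
  rcases le_or_gt 0 n with h | h
  · have hc : ((n.toNat : ℕ) : ℂ) = (n : ℂ) := by exact_mod_cast Int.toNat_of_nonneg h
    rw [x0z, if_pos h, d0_pow, hc]
  · have hc : (((-n).toNat : ℕ) : ℂ) = ((-n : ℤ) : ℂ) := by
      exact_mod_cast Int.toNat_of_nonneg (by omega : (0:ℤ) ≤ -n)
    rw [x0z, if_neg (not_le.mpr h), d0_powi, hc]
    push_cast
    module

lemma hdt' (c : DW) : dT * (tD * c) = tD * (dT * c) + c := by
  rw [← mul_assoc, hdt, add_mul, one_mul, mul_assoc]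

lemma dT_pow (k : ℕ) : dT * tD ^ (k+1) = tD ^ (k+1) * dT + ((k:ℂ)+1) • tD ^ k := by
  induction k with
  | zero => simpa using hdt
  | succ k ih =>
    rw [pow_succ, ← mul_assoc, ih]
    simp only [add_mul, smul_mul_assoc, mul_assoc, hdt, mul_add, mul_one]
    simp only [← mul_assoc, ← pow_succ]
    push_cast
    module

lemma comm_tD_gD (g : Polynomial ℂ) : Commute tD (gD g) := by
  unfold gD
  induction g using Polynomial.induction_on with
  | C a =>
    rw [Polynomial.aeval_C]
    exact (Algebra.commutes a tD).symm
  | add p q hp hq => simpa [map_add] using hp.add_right hq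
  | monomial n a hp =>
    simp only [map_mul, map_pow, Polynomial.aeval_X, Polynomial.aeval_C]
    exact Commute.mul_right ((Algebra.commutes a tD).symm) ((Commute.refl tD).pow_right _)

lemma gD_tD (g : Polynomial ℂ) : gD g * tD = tD * gD g := (comm_tD_gD g).symm

lemma gD_tD' (g : Polynomial ℂ) (c : DW) : gD g * (tD * c) = tD * (gD g * c) := by
  rw [← mul_assoc, gD_tD, mul_assoc]

lemma dT_gD (g : Polynomial ℂ) :
    dT * gD g = gD g * dT + gD (Polynomial.derivative g) := by
  unfold gD
  induction g using Polynomial.induction_on with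
  | C a =>
    simp only [Polynomial.aeval_C, Polynomial.derivative_C, map_zero, add_zero]
    exact (Algebra.commutes a dT).symm
  | add p q hp hq =>
    simp only [map_add, mul_add, add_mul, hp, hq]
    abel
  | monomial n a hp =>
    simp only [map_mul, map_pow, Polynomial.aeval_X, Polynomial.aeval_C,
      Polynomial.derivative_C_mul_X_pow, ← Algebra.smul_def, mul_smul_comm,
      smul_mul_assoc, dT_pow]
    push_cast
    module

lemma dT_gD' (g : Polynomial ℂ) (c : DW) :
    dT * (gD g * c) = gD g * (dT * c) + gD (Polynomial.derivative g) * c := by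
  rw [← mul_assoc, dT_gD, add_mul, mul_assoc]

lemma x0z_mul' (m n : ℤ) (c : R0) : x0z m * (x0z n * c) = x0z (m+n) * c := by
  rw [← mul_assoc, x0z_mul]

lemma d0_x0z' (n : ℤ) (c : R0) :
    (x0 * dx0) * (x0z n * c) = x0z n * ((x0 * dx0) * c) + (n : ℂ) • (x0z n * c) := by
  rw [← mul_assoc, d0_x0z, add_mul, smul_mul_assoc, mul_assoc]

-- the D-side identities
lemma Dident1 (β γ : ℂ) (g : Polynomial ℂ) :
    (β⁻¹ • (tD * gD g) + (β⁻¹ * γ) • 1 + tD * dT) * tD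
      - tD * (β⁻¹ • (tD * gD g) + (β⁻¹ * γ) • 1 + tD * dT) = tD := by
  simp only [add_mul, mul_add, smul_mul_assoc, mul_smul_comm, mul_assoc, one_mul, mul_one,
    hdt, hdt', gD_tD, gD_tD', dT_gD, dT_gD']
  module

lemma Dident2 {β : ℂ} (hβ : β ≠ 0) (γ : ℂ) (g : Polynomial ℂ) :
    (β⁻¹ • (tD * gD g) + (β⁻¹ * γ) • 1 + tD * dT) * (gD g + β • dT)
      - (gD g + β • dT) * (β⁻¹ • (tD * gD g) + (β⁻¹ * γ) • 1 + tD * dT)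
      = -(gD g + β • dT) := by
  simp only [add_mul, mul_add, smul_mul_assoc, mul_smul_comm, mul_assoc, one_mul, mul_one,
    hdt, hdt', gD_tD, gD_tD', dT_gD, dT_gD']
  match_scalars <;> field_simp <;> ring

lemma Dident3 (β : ℂ) (g : Polynomial ℂ) :
    tD * (gD g + β • dT) - (gD g + β • dT) * tD = (-β) • 1 := by
  simp only [add_mul, mul_add, smul_mul_assoc, mul_smul_comm, mul_assoc, one_mul, mul_one,
    hdt, hdt', gD_tD, gD_tD', dT_gD, dT_gD']
  module

section aux
variable (d : R0) (hd : ∀ n : ℤ, d * x0z n = x0z n * d + (n:ℂ) • x0z n)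
include hd

lemma hd' (n : ℤ) (c : R0) : d * (x0z n * c) = x0z n * (d * c) + (n:ℂ) • (x0z n * c) := by
  rw [← mul_assoc, hd, add_mul, smul_mul_assoc, mul_assoc]

lemma comm_P_x_aux (α : ℂ) (m n : ℤ) :
    (x0z m * d + ((m:ℂ) * α) • x0z m) * x0z n
      - x0z n * (x0z m * d + ((m:ℂ) * α) • x0z m)
      = (n : ℂ) • x0z (m+n) := by
  simp only [add_mul, mul_add, smul_mul_assoc, mul_smul_comm, mul_assoc,
    hd, hd' d hd, x0z_mul, x0z_mul']
  rw [show n + m = m + n from add_comm n m]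
  module

lemma comm_PP_aux (α : ℂ) (m n : ℤ) :
    (x0z m * d + ((m:ℂ) * α) • x0z m) * (x0z n * d + ((n:ℂ) * α) • x0z n)
      - (x0z n * d + ((n:ℂ) * α) • x0z n) * (x0z m * d + ((m:ℂ) * α) • x0z m)
      = (((n - m : ℤ)) : ℂ) • (x0z (m+n) * d + (((m+n : ℤ) : ℂ) * α) • x0z (m+n)) := by
  simp only [add_mul, mul_add, smul_mul_assoc, mul_smul_comm, mul_assoc,
    hd, hd' d hd, x0z_mul, x0z_mul']
  rw [show n + m = m + n from add_comm n m]
  push_cast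
  module

end aux

lemma commRD_smul_right (c : ℂ) (x y : R0 ⊗[ℂ] DW) :
    commRD x (c • y) = c • commRD x y := by
  simp [commRD, mul_smul_comm, smul_mul_assoc, smul_sub]

lemma commQ_tmul (m n : ℤ) (u v : DW) :
    commRD (x0z m ⊗ₜ u) (x0z n ⊗ₜ v) = x0z (m+n) ⊗ₜ[ℂ] (u * v - v * u) := by
  rw [commRD, Algebra.TensorProduct.tmul_mul_tmul, Algebra.TensorProduct.tmul_mul_tmul,
    x0z_mul, x0z_mul, add_comm n m, TensorProduct.tmul_sub]

lemma comm_qL_tmul (α : ℂ) (m n : ℤ) (h : DW) :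
    commRD (qL α m) (x0z n ⊗ₜ h) = (n:ℂ) • (x0z (m+n) ⊗ₜ[ℂ] h) := by
  rw [qL, commRD, Algebra.TensorProduct.tmul_mul_tmul, Algebra.TensorProduct.tmul_mul_tmul,
    one_mul, mul_one, ← TensorProduct.sub_tmul,
    comm_P_x_aux (x0 * dx0) d0_x0z α m n, TensorProduct.smul_tmul']

lemma commRD_smul_left (c : ℂ) (x y : R0 ⊗[ℂ] DW) :
    commRD (c • x) y = c • commRD x y := by
  simp [commRD, mul_smul_comm, smul_mul_assoc, smul_sub]

lemma x0z_one : x0z 1 = x0 := by simp [x0z]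
lemma x0z_negone : x0z (-1) = x0i := by simp [x0z]

lemma R0_gen : Algebra.adjoin ℂ ({x0, x0i, dx0} : Set R0) = ⊤ := by
  have hs : Function.Surjective (RingQuot.mkAlgHom ℂ R0Rel) :=
    RingQuot.mkAlgHom_surjective ℂ R0Rel
  have h1 : Subalgebra.map (RingQuot.mkAlgHom ℂ R0Rel) ⊤ = ⊤ := by
    rw [Algebra.map_top]
    exact (AlgHom.range_eq_top _).mpr hs
  rw [← FreeAlgebra.adjoin_range_ι, AlgHom.map_adjoin] at h1
  have h2 : (RingQuot.mkAlgHom ℂ R0Rel) '' Set.range (FreeAlgebra.ι ℂ)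
      = {x0, x0i, dx0} := by
    apply Set.Subset.antisymm
    · rintro _ ⟨_, ⟨i, rfl⟩, rfl⟩
      fin_cases i
      · exact Or.inl rfl
      · exact Or.inr (Or.inl rfl)
      · exact Or.inr (Or.inr rfl)
    · rintro y (rfl | rfl | rfl)
      exacts [⟨FreeAlgebra.ι ℂ 0, ⟨0, rfl⟩, rfl⟩, ⟨FreeAlgebra.ι ℂ 1, ⟨1, rfl⟩, rfl⟩,
        ⟨FreeAlgebra.ι ℂ 2, ⟨2, rfl⟩, rfl⟩]
  rwa [h2] at h1

lemma DW_gen : Algebra.adjoin ℂ ({tD, dT} : Set DW) = ⊤ := by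
  have hs : Function.Surjective (RingQuot.mkAlgHom ℂ DRel) :=
    RingQuot.mkAlgHom_surjective ℂ DRel
  have h1 : Subalgebra.map (RingQuot.mkAlgHom ℂ DRel) ⊤ = ⊤ := by
    rw [Algebra.map_top]
    exact (AlgHom.range_eq_top _).mpr hs
  rw [← FreeAlgebra.adjoin_range_ι, AlgHom.map_adjoin] at h1
  have h2 : (RingQuot.mkAlgHom ℂ DRel) '' Set.range (FreeAlgebra.ι ℂ)
      = {tD, dT} := by
    apply Set.Subset.antisymm
    · rintro _ ⟨_, ⟨i, rfl⟩, rfl⟩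
      fin_cases i
      · exact Or.inl rfl
      · exact Or.inr rfl
    · rintro y (rfl | rfl)
      exacts [⟨FreeAlgebra.ι ℂ 0, ⟨0, rfl⟩, rfl⟩, ⟨FreeAlgebra.ι ℂ 1, ⟨1, rfl⟩, rfl⟩]
  rwa [h2] at h1

set_option maxHeartbeats 1000000 in
lemma gen_top (α β γ : ℂ) (hβ : β ≠ 0) (g : Polynomial ℂ)
    (A : Subalgebra ℂ (R0 ⊗[ℂ] DW))
    (hqL : ∀ n : ℤ, qL α n ∈ A) (hqA : ∀ n : ℤ, qA n ∈ A)
    (hqB : ∀ n : ℤ, qB β g n ∈ A) (hqC : ∀ n : ℤ, qC β n ∈ A) :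
    ∀ z : R0 ⊗[ℂ] DW, z ∈ A := by
  have hone : ∀ n : ℤ, x0z n ⊗ₜ[ℂ] (1 : DW) ∈ A := by
    intro n
    have h := A.smul_mem (hqC n) ((-β)⁻¹)
    rw [qC, smul_smul, inv_mul_cancel₀ (neg_ne_zero.mpr hβ), one_smul] at h
    exact h
  have hx0 : x0 ⊗ₜ[ℂ] (1 : DW) ∈ A := by have := hone 1; rwa [x0z_one] at this
  have hx0i : x0i ⊗ₜ[ℂ] (1 : DW) ∈ A := by have := hone (-1); rwa [x0z_negone] at this
  have htD : (1 : R0) ⊗ₜ[ℂ] tD ∈ A := by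
    have := hqA 0; rwa [qA, x0z_zero] at this
  have hL0 : (x0 * dx0) ⊗ₜ[ℂ] (1 : DW) ∈ A := by
    have := hqL 0
    rw [qL, x0z_zero, one_mul] at this
    simpa using this
  have hdx0 : dx0 ⊗ₜ[ℂ] (1 : DW) ∈ A := by
    have h := A.mul_mem hx0i hL0
    rw [Algebra.TensorProduct.tmul_mul_tmul, one_mul, hx2'] at h
    exact h
  have hgg : (1 : R0) ⊗ₜ[ℂ] gD g ∈ A := by
    have h1 : (1 : R0) ⊗ₜ[ℂ] gD g
        = Polynomial.aeval ((1 : R0) ⊗ₜ[ℂ] tD) g := by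
      rw [gD, ← Algebra.TensorProduct.includeRight_apply,
        ← Algebra.TensorProduct.includeRight_apply]
      exact (Polynomial.aeval_algHom_apply _ tD g).symm
    rw [h1]
    exact Algebra.adjoin_le (Set.singleton_subset_iff.mpr htD)
      (Polynomial.aeval_mem_adjoin_singleton ℂ ((1 : R0) ⊗ₜ[ℂ] tD) (p := g))
  have hdT : (1 : R0) ⊗ₜ[ℂ] dT ∈ A := by
    have h := A.add_mem (hqB 0) (A.smul_mem hgg (-1 : ℂ))
    have h2 : qB β g 0 + (-1 : ℂ) • ((1 : R0) ⊗ₜ[ℂ] gD g)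
        = β • ((1 : R0) ⊗ₜ[ℂ] dT) := by
      rw [qB, x0z_zero, ← TensorProduct.tmul_smul, ← TensorProduct.tmul_add,
        ← TensorProduct.tmul_smul]
      congr 1
      module
    rw [h2] at h
    have h3 := A.smul_mem h β⁻¹
    rwa [smul_smul, inv_mul_cancel₀ hβ, one_smul] at h3
  have hleft : ∀ a : R0, a ⊗ₜ[ℂ] (1 : DW) ∈ A := by
    intro a
    have h0 : a ∈ Algebra.adjoin ℂ ({x0, x0i, dx0} : Set R0) := by
      rw [R0_gen]; trivial
    have h2 : (Algebra.TensorProduct.includeLeft (R := ℂ) (S := ℂ)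
          (A := R0) (B := DW)) a
        ∈ Subalgebra.map (Algebra.TensorProduct.includeLeft (R := ℂ) (S := ℂ)
          (A := R0) (B := DW)) (Algebra.adjoin ℂ ({x0, x0i, dx0} : Set R0)) :=
      Subalgebra.mem_map.mpr ⟨a, h0, rfl⟩
    rw [AlgHom.map_adjoin] at h2
    have h3 : (Algebra.TensorProduct.includeLeft (R := ℂ) (S := ℂ)
        (A := R0) (B := DW)) '' {x0, x0i, dx0} ⊆ (A : Set (R0 ⊗[ℂ] DW)) := by
      rintro _ ⟨y, (rfl | rfl | rfl), rfl⟩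
      exacts [hx0, hx0i, hdx0]
    exact Algebra.adjoin_le h3 h2
  have hright : ∀ b : DW, (1 : R0) ⊗ₜ[ℂ] b ∈ A := by
    intro b
    have h0 : b ∈ Algebra.adjoin ℂ ({tD, dT} : Set DW) := by
      rw [DW_gen]; trivial
    have h2 : (Algebra.TensorProduct.includeRight (R := ℂ)
          (A := R0) (B := DW)) b
        ∈ Subalgebra.map (Algebra.TensorProduct.includeRight (R := ℂ)
          (A := R0) (B := DW)) (Algebra.adjoin ℂ ({tD, dT} : Set DW)) :=
      Subalgebra.mem_map.mpr ⟨b, h0, rfl⟩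
    rw [AlgHom.map_adjoin] at h2
    have h3 : (Algebra.TensorProduct.includeRight (R := ℂ)
        (A := R0) (B := DW)) '' {tD, dT} ⊆ (A : Set (R0 ⊗[ℂ] DW)) := by
      rintro _ ⟨y, (rfl | rfl), rfl⟩
      exacts [htD, hdT]
    exact Algebra.adjoin_le h3 h2
  intro z
  induction z using TensorProduct.induction_on with
  | zero => exact A.zero_mem
  | tmul a b =>
    have h := A.mul_mem (hleft a) (hright b)
    rwa [Algebra.TensorProduct.tmul_mul_tmul, mul_one, one_mul] at h
  | add x y hx hy => exact A.add_mem hx hy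

theorem phi_alphabetagammag_hom_surjective
    (α β γ : ℂ) (hβ : β ≠ 0) (g : Polynomial ℂ) :
    (∀ m n : ℤ,
      commRD (qL α m) (qL α n) = ((n - m : ℤ) : ℂ) • qL α (m + n) ∧
      commRD (qL α m) (qA n) = (n : ℂ) • qA (m + n) ∧
      commRD (qL α m) (qB β g n) = (n : ℂ) • qB β g (m + n) ∧
      commRD (qL α m) (qC β n) = (n : ℂ) • qC β (m + n) ∧
      commRD (qL α m) (qD β γ g n) = (n : ℂ) • qD β γ g (m + n) ∧
      commRD (qA m) (qB β g n) = qC β (m + n) ∧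
      commRD (qD β γ g m) (qA n) = qA (m + n) ∧
      commRD (qD β γ g m) (qB β g n) = -qB β g (m + n) ∧
      commRD (qA m) (qA n) = 0 ∧
      commRD (qA m) (qC β n) = 0 ∧
      commRD (qB β g m) (qB β g n) = 0 ∧
      commRD (qB β g m) (qC β n) = 0 ∧
      commRD (qC β m) (qC β n) = 0 ∧
      commRD (qD β γ g m) (qC β n) = 0 ∧
      commRD (qD β γ g m) (qD β γ g n) = 0) ∧
    Algebra.adjoin ℂ
        (Set.range (qL α) ∪ Set.range (qD β γ g) ∪ Set.range qA
          ∪ Set.range (qB β g) ∪ Set.range (qC β)) = ⊤ := by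
  constructor
  · intro m n
    refine ⟨?_, ?_, ?_, ?_, ?_, ?_, ?_, ?_, ?_, ?_, ?_, ?_, ?_, ?_, ?_⟩
    · simp only [commRD, qL, Algebra.TensorProduct.tmul_mul_tmul, mul_one]
      rw [← TensorProduct.sub_tmul, comm_PP_aux (x0 * dx0) d0_x0z α m n,
        TensorProduct.smul_tmul']
    · simp only [qA, comm_qL_tmul]
    · simp only [qB, comm_qL_tmul]
    · simp only [qC, commRD_smul_right, comm_qL_tmul]
      rw [smul_comm]
    · simp only [qD, comm_qL_tmul]
    · simp only [qA, qB, qC]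
      rw [commQ_tmul, Dident3 β g, TensorProduct.tmul_smul]
    · simp only [qD, qA]
      rw [commQ_tmul, Dident1 β γ g]
    · simp only [qD, qB]
      rw [commQ_tmul, Dident2 hβ γ g, TensorProduct.tmul_neg]
    · simp only [qA]
      rw [commQ_tmul, sub_self, TensorProduct.tmul_zero]
    · simp only [qA, qC, commRD_smul_right]
      rw [commQ_tmul]
      simp
    · simp only [qB]
      rw [commQ_tmul, sub_self, TensorProduct.tmul_zero]
    · simp only [qB, qC, commRD_smul_right]
      rw [commQ_tmul]
      simp
    · simp only [qC, commRD_smul_right, commRD_smul_left]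
      rw [commQ_tmul]
      simp
    · simp only [qD, qC, commRD_smul_right]
      rw [commQ_tmul]
      simp
    · simp only [qD]
      rw [commQ_tmul, sub_self, TensorProduct.tmul_zero]
  · rw [eq_top_iff]
    intro z _
    refine gen_top α β γ hβ g _ ?_ ?_ ?_ ?_ z
    · exact fun n => Algebra.subset_adjoin (Set.mem_union_left _ (Set.mem_union_left _
        (Set.mem_union_left _ (Set.mem_union_left _ ⟨n, rfl⟩))))
    · exact fun n => Algebra.subset_adjoin (Set.mem_union_left _ (Set.mem_union_left _
        (Set.mem_union_right _ ⟨n, rfl⟩)))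
    · exact fun n => Algebra.subset_adjoin (Set.mem_union_left _
        (Set.mem_union_right _ ⟨n, rfl⟩))
    · exact fun n => Algebra.subset_adjoin (Set.mem_union_right _ ⟨n, rfl⟩)

end
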